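/- Let ε > 0, δ ∈ (0,1). With n₁ = 1 + ⌊(1/ε)·ln((e^ε+2δ−1)/((e^ε+1)δ))⌋ and n₂ = n₁ + ⌊(1/ε)·ln(1 + ((e^ε−1)/δ)·(1 − π₀(n₁)))⌋, the recursively defined π₀ satisfies π₀(n) = 1 for all n > n₂. -/

import Mathlib

open Real

theorem pi_opt_one_after_second_crossover
    (ε δ : ℝ) (hε : 0 < ε) (hδ0 : 0 < δ) (hδ1 : δ < 1)
    (π₀ : ℕ → ℝ) (h0 : π₀ 0 = 0)
    (hrec : ∀ n, π₀ (n + 1) =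
      min (min (exp ε * π₀ n + δ) (1 - exp (-ε) * (1 - π₀ n - δ))) 1)
    (n₁ n₂ : ℕ)
    (hn₁ : (n₁ : ℤ) = 1 + ⌊(1 / ε) * Real.log ((exp ε + 2 * δ - 1) / ((exp ε + 1) * δ))⌋)
    (hn₂ : (n₂ : ℤ) = (n₁ : ℤ) +
      ⌊(1 / ε) * Real.log (1 + ((exp ε - 1) / δ) * (1 - π₀ n₁))⌋) :
    ∀ n : ℕ, n₂ < n → π₀ n = 1 := by
  have hE : 1 < exp ε := by
    have := Real.exp_lt_exp.mpr hε
    simpa using this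
  have hE0 : 0 < exp ε := exp_pos ε
  have hE1 : 0 < exp ε - 1 := by linarith
  have hδ1' : 0 < 1 - δ := by linarith
  have hgrw : ∀ x : ℝ, 1 - exp (-ε) * (1 - x - δ) = (exp ε - 1 + x + δ) / exp ε := by
    intro x
    rw [exp_neg]
    field_simp
    ring
  have hrec' : ∀ n, π₀ (n + 1) =
      min (min (exp ε * π₀ n + δ) ((exp ε - 1 + π₀ n + δ) / exp ε)) 1 := by
    intro n; rw [hrec, hgrw]
  have hle1 : ∀ n, π₀ n ≤ 1 := by
    intro n
    cases n with
    | zero => rw [h0]; norm_num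
    | succ k => rw [hrec']; exact min_le_right _ _
  have hpos : ∀ n, 0 ≤ π₀ n := by
    intro n
    induction n with
    | zero => rw [h0]
    | succ k ih =>
      rw [hrec']
      refine le_min (le_min (by nlinarith) ?_) zero_le_one
      positivity
  have hmono : Monotone π₀ := by
    apply monotone_nat_of_le_succ
    intro n
    have h1 := hpos n
    have h2 := hle1 n
    rw [hrec']
    refine le_min (le_min (by nlinarith) ?_) h2
    rw [le_div_iff₀ hE0]
    nlinarith [mul_nonneg (by linarith : (0:ℝ) ≤ 1 - π₀ n) hE1.le]
  set xs : ℝ := (1 - δ) / (exp ε + 1) with hxs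
  have hxs0 : 0 < xs := by positivity
  have hlow : ∀ n : ℕ, min (δ * (exp ((n:ℝ) * ε) - 1) / (exp ε - 1)) xs ≤ π₀ n := by
    intro n
    induction n with
    | zero =>
      refine le_trans (min_le_left _ _) ?_
      rw [h0]
      simp
    | succ k ih =>
      rcases le_or_gt xs (π₀ k) with hc | hc
      · exact le_trans (min_le_right _ _) (hc.trans (hmono (Nat.le_succ k)))
      · have hpk : δ * (exp ((k:ℝ) * ε) - 1) / (exp ε - 1) ≤ π₀ k := by
          rcases le_total (δ * (exp ((k:ℝ) * ε) - 1) / (exp ε - 1)) xs with h | h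
          · rwa [min_eq_left h] at ih
          · rw [min_eq_right h] at ih; linarith
        have hck : π₀ k * (exp ε + 1) < 1 - δ := (lt_div_iff₀ (by positivity)).mp hc
        have hfg : exp ε * π₀ k + δ ≤ (exp ε - 1 + π₀ k + δ) / exp ε := by
          rw [le_div_iff₀ hE0]
          nlinarith [mul_lt_mul_of_pos_right hck hE1]
        have hf1 : exp ε * π₀ k + δ ≤ 1 := by
          nlinarith [hpos k]
        have heq : π₀ (k+1) = exp ε * π₀ k + δ := by
          rw [hrec', min_eq_left hfg, min_eq_left hf1]
        refine le_trans (min_le_left _ _) ?_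
        rw [heq]
        have hek : exp ((k+1 : ℕ) * ε) = exp (k * ε) * exp ε := by
          push_cast
          rw [add_mul, one_mul, exp_add]
        rw [hek, div_le_iff₀ hE1]
        rw [div_le_iff₀ hE1] at hpk
        nlinarith [mul_le_mul_of_nonneg_right hpk hE0.le]
  set A : ℝ := (exp ε + 2 * δ - 1) / ((exp ε + 1) * δ) with hA
  have hA1 : 1 < A := by
    rw [hA, lt_div_iff₀ (by positivity)]
    nlinarith [mul_pos hδ1' hE1]
  have hn₁R : ((1:ℝ)/ε) * Real.log A < n₁ := by
    have h1 := Int.lt_floor_add_one ((1/ε) * Real.log A)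
    have hcast : (n₁ : ℝ) = 1 + (⌊(1/ε) * Real.log A⌋ : ℝ) := by
      exact_mod_cast hn₁
    linarith
  have hAexp : A < exp (n₁ * ε) := by
    have hlog : Real.log A < n₁ * ε := by
      calc Real.log A = ε * ((1/ε) * Real.log A) := by field_simp
        _ < ε * n₁ := by exact mul_lt_mul_of_pos_left hn₁R hε
        _ = n₁ * ε := by ring
    calc A = exp (Real.log A) := (exp_log (by linarith)).symm
      _ < _ := exp_lt_exp.mpr hlog
  have hxsn₁ : xs ≤ π₀ n₁ := by
    have h := hlow n₁
    have hpx : xs < δ * (exp (n₁ * ε) - 1) / (exp ε - 1) := by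
      rw [hxs, div_lt_div_iff₀ (by positivity) hE1]
      have h2 := hAexp
      rw [hA, div_lt_iff₀ (by positivity)] at h2
      nlinarith
    rwa [min_eq_right hpx.le] at h
  set c : ℝ := δ / (exp ε - 1) with hc
  have hc0 : 0 < c := by positivity
  have hkey : ∀ n, xs ≤ π₀ n → π₀ n ≤ 1 - δ →
      π₀ (n+1) = (exp ε - 1 + π₀ n + δ) / exp ε := by
    intro n hx h1
    rw [hrec']
    have hx' : (1-δ) ≤ π₀ n * (exp ε + 1) := (div_le_iff₀ (by positivity)).mp hx
    have hgf : (exp ε - 1 + π₀ n + δ) / exp ε ≤ exp ε * π₀ n + δ := by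
      rw [div_le_iff₀ hE0]
      nlinarith [mul_le_mul_of_nonneg_right hx' hE1.le]
    have hg1 : (exp ε - 1 + π₀ n + δ) / exp ε ≤ 1 := by
      rw [div_le_iff₀ hE0]; linarith
    rw [min_eq_right hgf, min_eq_left hg1]
  have hjump : ∀ n, 1 - δ < π₀ n → π₀ (n+1) = 1 := by
    intro n h
    rw [hrec']
    have hf : (1:ℝ) ≤ exp ε * π₀ n + δ := by nlinarith [hpos n]
    have hg : (1:ℝ) ≤ (exp ε - 1 + π₀ n + δ) / exp ε := by
      rw [le_div_iff₀ hE0]; linarith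
    rw [min_eq_right (le_min hf hg)]
  have hQ : ∀ k, 1 - δ < π₀ (n₁ + k) ∨
      (1 - π₀ (n₁ + k) + c) * exp (k * ε) ≤ 1 - π₀ n₁ + c := by
    intro k
    induction k with
    | zero => right; simp
    | succ k ih =>
      rcases ih with h | h
      · left
        rw [show n₁ + (k+1) = (n₁ + k) + 1 from rfl, hjump _ h]
        linarith
      · rcases lt_or_ge (1-δ) (π₀ (n₁+k)) with h2 | h2
        · left
          rw [show n₁ + (k+1) = (n₁+k)+1 from rfl, hjump _ h2]; linarith
        · right
          have hx : xs ≤ π₀ (n₁+k) := hxsn₁.trans (hmono (Nat.le_add_right n₁ k))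
          have heq := hkey _ hx h2
          rw [show n₁ + (k+1) = (n₁+k)+1 from rfl, heq]
          have hek : exp ((k+1 : ℕ) * ε) = exp (k*ε) * exp ε := by
            push_cast; rw [add_mul, one_mul, exp_add]
          rw [hek]
          have hident : (1 - (exp ε - 1 + π₀ (n₁+k) + δ)/exp ε + c) * exp ε
              = 1 - π₀ (n₁+k) + c := by
            rw [hc]; field_simp; ring
          calc (1 - (exp ε - 1 + π₀ (n₁+k) + δ)/exp ε + c) * (exp (k*ε) * exp ε)
              = ((1 - (exp ε - 1 + π₀ (n₁+k) + δ)/exp ε + c) * exp ε) * exp (k*ε) := by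
                ring
            _ = (1 - π₀ (n₁+k) + c) * exp (k*ε) := by rw [hident]
            _ ≤ _ := h
  set B : ℝ := 1 + ((exp ε - 1)/δ) * (1 - π₀ n₁) with hB
  have hB1 : 1 ≤ B := by
    have h1 : 0 ≤ ((exp ε - 1)/δ) * (1 - π₀ n₁) :=
      mul_nonneg (by positivity) (by linarith [hle1 n₁])
    rw [hB]; linarith
  have hmfloor : (0:ℤ) ≤ ⌊(1/ε) * Real.log B⌋ :=
    Int.floor_nonneg.mpr (mul_nonneg (by positivity) (log_nonneg hB1))
  have hn₁₂ : n₁ ≤ n₂ := by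
    have h : (n₁:ℤ) ≤ (n₂:ℤ) := by rw [hn₂]; linarith
    exact_mod_cast h
  obtain ⟨m, hm⟩ : ∃ m, n₂ = n₁ + m := ⟨n₂ - n₁, (Nat.add_sub_cancel' hn₁₂).symm⟩
  have hmZ : (m:ℤ) = ⌊(1/ε) * Real.log B⌋ := by
    rw [hm] at hn₂; push_cast at hn₂; linarith
  have hmR : (m:ℝ) = (⌊(1/ε) * Real.log B⌋ : ℝ) := by exact_mod_cast hmZ
  have hlogB : Real.log B < ((m:ℝ) + 1) * ε := by
    have h1 : (1/ε) * Real.log B < (m:ℝ) + 1 := by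
      have h2 := Int.lt_floor_add_one ((1/ε) * Real.log B)
      rw [← hmR] at h2; exact h2
    calc Real.log B = ε * ((1/ε) * Real.log B) := by field_simp
      _ < ε * ((m:ℝ) + 1) := mul_lt_mul_of_pos_left h1 hε
      _ = ((m:ℝ) + 1) * ε := by ring
  have hBexp : B < exp (((m:ℝ)+1) * ε) := by
    calc B = exp (Real.log B) := (exp_log (by linarith)).symm
      _ < _ := exp_lt_exp.mpr hlogB
  have hfinal : 1 - δ < π₀ n₂ := by
    rcases hQ m with h | h
    · rw [hm]; exact h
    · rw [hm]
      have hs₁ : 1 - π₀ n₁ + c = c * B := by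
        rw [hB, hc]; field_simp; ring
      have hcE : c * exp ε = δ + c := by rw [hc]; field_simp; ring
      have hexpm : exp (((m:ℝ)+1)*ε) = exp ((m:ℝ)*ε) * exp ε := by
        rw [add_mul, one_mul, exp_add]
      have hcB : c * B < (δ + c) * exp ((m:ℝ) * ε) := by
        calc c * B < c * exp (((m:ℝ)+1)*ε) := mul_lt_mul_of_pos_left hBexp hc0
          _ = (δ + c) * exp ((m:ℝ)*ε) := by rw [hexpm, ← hcE]; ring
      have hem : 0 < exp ((m:ℝ)*ε) := exp_pos _
      have hlt : (1 - π₀ (n₁ + m) + c) * exp ((m:ℝ)*ε) < (δ + c) * exp ((m:ℝ)*ε) := by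
        calc (1 - π₀ (n₁ + m) + c) * exp ((m:ℝ)*ε) ≤ 1 - π₀ n₁ + c := h
          _ = c * B := hs₁
          _ < (δ + c) * exp ((m:ℝ)*ε) := hcB
      have := lt_of_mul_lt_mul_right hlt hem.le
      linarith
  have h1 : π₀ (n₂ + 1) = 1 := hjump _ hfinal
  have hall : ∀ k, π₀ (n₂ + 1 + k) = 1 := by
    intro k
    induction k with
    | zero => exact h1
    | succ k ih =>
      rw [show n₂+1+(k+1) = (n₂+1+k)+1 from rfl]
      exact hjump _ (by rw [ih]; linarith)
  intro n hn
  obtain ⟨k, hk⟩ : ∃ k, n = n₂ + 1 + k := ⟨n - (n₂+1), by omega⟩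
  rw [hk]; exact hall k
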